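/- Let k | n or n | k, and let 𝒜 = ⟨a₁…a_n, 0⟩ ∈ Σ^n × Z_k be a maximal pair different from ⟨0^n, 0⟩. Let i be such that a_i > 0, and set j = n if n | k, or j = the smallest multiple of k with i ≤ j < n (if it exists) when k | n. Then the pair ℬ = ⟨a₁…a_{i−1}(a_i − 1)(s−1)^{j−i}, 0⟩ ∈ Σ^j × Z_k is maximal among its rotations. -/

import Mathlib

set_option maxHeartbeats 1000000


/-- Right rotation by `i` of a pair in `Σ^n × ℤ/k`. -/
def rotPair (s k : ℕ) (i : ℕ) (P : List (Fin s) × ZMod k) : List (Fin s) × ZMod k :=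
  (P.1.rotate i, P.2 + (i : ZMod k))

/-- The order ≻ : `P ≻ Q` iff (same second component and `P.1 > Q.1` lexicographically)
or `(k-1-P.2) > (k-1-Q.2)`, i.e. `P.2 < Q.2` as residues. -/
def succPair (s k : ℕ) (P Q : List (Fin s) × ZMod k) : Prop :=
  (List.Lex (· < ·) Q.1 P.1 ∧ P.2 = Q.2) ∨ P.2.val < Q.2.val

/-- A pair is maximal when no rotation of it is ≻-greater than it. -/
def isMaxPair (s k : ℕ) (P : List (Fin s) × ZMod k) : Prop :=
  ∀ i : ℕ, ¬ succPair s k (rotPair s k i P) P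

lemma lex_iff_exists {s : ℕ} :
    ∀ (X Y : List (Fin s)), X.length = Y.length →
    (List.Lex (· < ·) X Y ↔ ∃ m, ∃ (h1 : m < X.length) (h2 : m < Y.length),
      (∀ q (hq1 : q < X.length) (hq2 : q < Y.length), q < m → X[q] = Y[q]) ∧ X[m] < Y[m])
  | [], [], _ => by
    constructor
    · intro h; cases h
    · rintro ⟨m, h1, -⟩; exact absurd h1 (by simp)
  | [], y :: Y, h => by simp at h
  | x :: X, [], h => by simp at h
  | x :: X, y :: Y, h => by
    have hlen : X.length = Y.length := by simpa using h
    constructor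
    · intro hlex
      cases hlex with
      | rel hr =>
        exact ⟨0, by simp, by simp, fun q _ _ hq => absurd hq (Nat.not_lt_zero q), by simpa⟩
      | cons htail =>
        obtain ⟨m, h1, h2, hpre, hlt⟩ := (lex_iff_exists X Y hlen).mp htail
        refine ⟨m + 1, by simpa using h1, by simpa using h2, ?_, by simpa using hlt⟩
        intro q hq1 hq2 hq
        cases q with
        | zero => simp
        | succ q => simpa using hpre q (by simpa using hq1) (by simpa using hq2) (by omega)
    · rintro ⟨m, h1, h2, hpre, hlt⟩
      cases m with
      | zero => exact List.Lex.rel (by simpa using hlt)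
      | succ m =>
        have hxy : x = y := by exact hpre 0 (by simp) (by simp) (by omega)
        subst hxy
        refine List.Lex.cons ((lex_iff_exists X Y hlen).mpr ⟨m, by simpa using h1,
          by simpa using h2, ?_, by simpa using hlt⟩)
        intro q hq1 hq2 hq
        exact hpre (q + 1) (by simpa using hq1) (by simpa using hq2) (by omega)

lemma lex_irrefl' {s : ℕ} (l : List (Fin s)) : ¬ List.Lex (· < ·) l l := by
  intro h
  exact List.Lex.to_ne (List.Lex.imp (fun a b hab => Fin.ne_of_lt hab) l l h) rfl

/-- If `⟨A,0⟩ ∈ Σ^n × ℤ/k` is maximal, `A ≠ 0^n`, `a` is the symbol of `A` at (0-based)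
position `i` with `a > 0`, and `j = n` in case `n ∣ k`, or `j` is the least multiple of `k`
with (1-based) `i+1 ≤ j < n` in case `k ∣ n`, then
`⟨A_i (a-1) (s-1)^{j-i-1}, 0⟩ ∈ Σ^j × ℤ/k` is maximal among its rotations. -/
theorem stmt6 (s n k : ℕ) (hs : 2 ≤ s) (hn : 0 < n) (hk : 0 < k)
    (A : List (Fin s)) (hA : A.length = n)
    (hmax : isMaxPair s k (A, (0 : ZMod k)))
    (hA0 : A ≠ List.replicate n (⟨0, by omega⟩ : Fin s))
    (i : ℕ) (a : Fin s) (ha : A[i]? = some a) (hapos : 0 < a.val)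
    (j : ℕ)
    (hj : (n ∣ k ∧ j = n) ∨
          (k ∣ n ∧ k ∣ j ∧ i < j ∧ j < n ∧ ∀ j' : ℕ, k ∣ j' → i < j' → j ≤ j')) :
    isMaxPair s k
      ((A.take i ++ (⟨a.val - 1, by have := a.isLt; omega⟩ : Fin s) ::
          List.replicate (j - i - 1) (⟨s - 1, by omega⟩ : Fin s)), (0 : ZMod k)) := by
  haveI : NeZero k := ⟨hk.ne'⟩
  obtain ⟨hi, hiA⟩ := List.getElem?_eq_some_iff.mp ha
  have hiA' : A[i]'hi = a := hiA
  have hij : i < j := by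
    rcases hj with ⟨-, rfl⟩ | ⟨-, -, hij, -⟩
    · omega
    · exact hij
  obtain ⟨d, hd⟩ : ∃ d : Fin s,
      (⟨a.val - 1, by have := a.isLt; omega⟩ : Fin s) = d := ⟨_, rfl⟩
  have hda : d < a := by rw [← hd, Fin.lt_def]; simpa using by omega
  rw [hd]
  generalize hB : A.take i ++ d :: List.replicate (j - i - 1) (⟨s - 1, by omega⟩ : Fin s) = B
  have lenB : B.length = j := by
    simp only [← hB, List.length_append, List.length_take, List.length_cons,
      List.length_replicate, hA]
    omega
  have hiB : i < B.length := by omega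
  have hBlt : ∀ q (hq : q < i), B[q]'(Nat.lt_trans hq hiB) = A[q]'(Nat.lt_trans hq hi) := by
    intro q hq
    simp only [← hB]
    rw [List.getElem_append_left (by simp only [List.length_take, hA]; omega),
      List.getElem_take]
  have hBi : B[i]'hiB = d := by
    have h1 : (A.take i).length ≤ i := by simp [List.length_take]
    simp only [← hB]
    rw [List.getElem_append_right h1]
    have h0 : i - (A.take i).length = 0 := by simp only [List.length_take, hA]; omega
    simp only [h0, List.getElem_cons_zero]
  intro r hsucc
  rcases hsucc with ⟨hlex0, hr0⟩ | hval
  · have hlex : List.Lex (· < ·) B (B.rotate r) := hlex0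
    have hr0' : ((0 : ZMod k) + (r : ZMod k)) = 0 := hr0
    rw [zero_add] at hr0'
    have hkr : k ∣ r := (ZMod.natCast_eq_zero_iff r k).mp hr0'
    rcases hj with ⟨hnk, hjeq⟩ | ⟨hkn, hkj, hij', hjn, hmin⟩
    · -- case n ∣ k, j = n : the rotation is trivial
      have hnr : n ∣ r := hnk.trans hkr
      have hmod : r % B.length = 0 := by
        rw [lenB, hjeq]
        obtain ⟨c, rfl⟩ := hnr
        simp [Nat.mul_mod_right]
      have hBB : B.rotate r = B := by
        rw [← List.rotate_mod, hmod, List.rotate_zero]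
      rw [hBB] at hlex
      exact lex_irrefl' B hlex
    · -- case k ∣ n
      obtain ⟨t, hT⟩ : ∃ t, r % j = t := ⟨_, rfl⟩
      have hkt : k ∣ t := hT ▸ (Nat.dvd_mod_iff hkj).mpr hkr
      have htj : t < j := hT ▸ Nat.mod_lt _ (by omega)
      have hrot : B.rotate r = B.rotate t := by
        conv_lhs => rw [← List.rotate_mod B r, lenB, hT]
      rw [hrot] at hlex
      by_cases ht0 : t = 0
      · rw [ht0, List.rotate_zero] at hlex
        exact lex_irrefl' B hlex
      have hti : t ≤ i := by
        by_contra h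
        push_neg at h
        exact absurd (hmin t hkt h) (by omega)
      have lenRot : (B.rotate t).length = B.length := List.length_rotate B t
      obtain ⟨m, h1, h2, hpre, hlt⟩ := (lex_iff_exists B (B.rotate t) lenRot.symm).mp hlex
      have ht1 : 0 < t := Nat.pos_of_ne_zero ht0
      clear ha hA0 hd hB hT hrot hlex hlex0 hr0 hr0' hmin hkn hkj hkr ht0
      have hrotq : ∀ q (hq : q + t ≤ i),
          (B.rotate t)[q]'(lenRot.symm ▸ Nat.lt_of_le_of_lt (Nat.le_trans (Nat.le_add_right q t) hq) hiB)
            = B[q + t]'(Nat.lt_of_le_of_lt hq hiB) := by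
        intro q hq
        rw [List.getElem_rotate]
        have hmod : (q + t) % B.length = q + t := by rw [lenB]; exact Nat.mod_eq_of_lt (by omega)
        simp only [hmod]
      have hApre : ∀ q (hqm : q < m) (hqit : q < i - t),
          A[q]'(Nat.lt_trans (Nat.lt_of_lt_of_le hqit (Nat.sub_le i t)) hi)
            = A[q + t]'(Nat.lt_of_le_of_lt (by omega : q + t ≤ i) hi) := by
        intro q hqm hqit
        have hqt : q + t < i := by omega
        have h3 := hpre q (Nat.lt_trans hqm h1) (Nat.lt_trans hqm h2) hqm
        rw [hrotq q (Nat.le_of_lt hqt)] at h3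
        rw [← hBlt q (Nat.lt_of_lt_of_le hqit (Nat.sub_le i t)), ← hBlt (q + t) hqt]
        exact h3
      have lenRA : (A.rotate t).length = A.length := List.length_rotate A t
      have hrotA : ∀ q (hq : q + t ≤ i),
          (A.rotate t)[q]'(lenRA.symm ▸ Nat.lt_of_le_of_lt (Nat.le_trans (Nat.le_add_right q t) hq) hi)
            = A[q + t]'(Nat.lt_of_le_of_lt hq hi) := by
        intro q hq
        rw [List.getElem_rotate]
        have hmod : (q + t) % A.length = q + t := by rw [hA]; exact Nat.mod_eq_of_lt (by omega)
        simp only [hmod]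
      have hm1 : m < j := by omega
      have hlexA : List.Lex (· < ·) A (A.rotate t) := by
        apply (lex_iff_exists A (A.rotate t) lenRA.symm).mpr
        rcases lt_or_ge m (i - t) with hcase | hcase
        · -- first difference inside the common prefix
          have hmA : m < A.length := by omega
          have hmrA : m < (A.rotate t).length := by omega
          refine ⟨m, hmA, hmrA, ?_, ?_⟩
          · intro q hq1 hq2 hq
            have hqi : q + t ≤ i := by omega
            have hqit : q < i - t := by omega
            rw [hrotA q hqi]
            exact hApre q hq hqit
          · have hmt : m + t ≤ i := by omega
            have hmti : m + t < i := by omega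
            have hmi : m < i := by omega
            rw [hrotA m hmt]
            have h3 := hlt
            rw [hrotq m hmt] at h3
            rw [hBlt m hmi, hBlt (m + t) hmti] at h3
            exact h3
        · -- first difference at position i - t
          have hitA : i - t < A.length := by omega
          have hitrA : i - t < (A.rotate t).length := by omega
          refine ⟨i - t, hitA, hitrA, ?_, ?_⟩
          · intro q hq1 hq2 hq
            have hqi : q + t ≤ i := by omega
            have hqm : q < m := by omega
            rw [hrotA q hqi]
            exact hApre q hqm hq
          · have hle : i - t + t ≤ i := by omega
            have hit : i - t + t = i := by omega
            rw [hrotA (i - t) hle]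
            simp only [hit]
            rw [hiA']
            rcases eq_or_lt_of_le hcase with he | he
            · -- m = i - t
              have hmt : m + t ≤ i := by omega
              have hmteq : m + t = i := by omega
              have hmi : m < i := by omega
              have h3 := hlt
              rw [hrotq m hmt] at h3
              simp only [hmteq] at h3
              rw [hBi] at h3
              rw [hBlt m hmi] at h3
              have hgoal : A[m]'(Nat.lt_trans hmi hi) < a := lt_trans h3 hda
              simp only [← he] at hgoal ⊢
              exact hgoal
            · -- i - t < m : positions agree at i - t
              have hitB : i - t < B.length := by omega
              have hitrB : i - t < (B.rotate t).length := by omega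
              have hiti : i - t < i := by omega
              have h4 := hpre (i - t) hitB hitrB he
              rw [hrotq (i - t) hle] at h4
              simp only [hit] at h4
              rw [hBi] at h4
              rw [hBlt (i - t) hiti] at h4
              rw [h4]
              exact hda
      refine hmax t (Or.inl ⟨hlexA, ?_⟩)
      show (0 : ZMod k) + (t : ZMod k) = 0
      rw [zero_add]
      exact (ZMod.natCast_eq_zero_iff t k).mpr hkt
  · have hval' : ((0 : ZMod k) + (r : ZMod k)).val < (0 : ZMod k).val := hval
    rw [ZMod.val_zero] at hval'
    omega
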